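/- arXiv:1412.3080 — 2 statements merged into one kernel-verified Lean document; each statement's English description precedes it below -/
import Mathlib

section
/- For every positive integer r and every positive integer Ω, there are only finitely many sparsely Schemmel totient numbers n of order r with ω(n) < Ω; equivalently, ω(n) → ∞ as n → ∞ along sparsely Schemmel totient numbers of order r. -/
open Set


/-- The Schemmel totient function of order `r` (multiplicative, with
`S r (p^a) = p^(a-1) * (p - r)`; note `p - r = 0` in `ℕ` when `p ≤ r`). -/
def S (r n : ℕ) : ℕ := ∏ q ∈ n.primeFactors, q ^ (n.factorization q - 1) * (q - r)

/-- `b r` is the number of primes `≤ r`. -/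
def b (r : ℕ) : ℕ := ((Finset.range (r + 1)).filter Nat.Prime).card

/-- `p i` is the `i`-th prime (`p 1 = 2`, `p 2 = 3`, ...). -/
noncomputable def p (i : ℕ) : ℕ := Nat.nth Nat.Prime (i - 1)

/-- `n` is a sparsely Schemmel totient number of order `r`. -/
def SST (r n : ℕ) : Prop := 0 < S r n ∧ ∀ m : ℕ, n < m → 0 < S r m → S r n < S r m

/-- Jacobsthal function: the smallest `a` such that every `a` consecutive
integers contain one coprime to `N`. -/
noncomputable def J (N : ℕ) : ℕ := sInf {a : ℕ | ∀ x : ℕ, ∃ y ∈ Finset.Ico x (x + a), Nat.Coprime y N}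

/-- `Pk k n` is the `k`-th largest prime divisor of `n` (or `0` if `ω(n) < k`). -/
def Pk (k n : ℕ) : ℕ := ((n.primeFactors.sort (· ≤ ·)).reverse).getD (k - 1) 0

/-- `Qk r k n` is the `k`-th smallest prime greater than `r` not dividing `n`. -/
noncomputable def Qk (r k n : ℕ) : ℕ := Nat.nth (fun q : ℕ => q.Prime ∧ r < q ∧ ¬ q ∣ n) (k - 1)

/-- `Rn n` is `n` divided by the product of its distinct prime factors. -/
def Rn (n : ℕ) : ℕ := n / ∏ q ∈ n.primeFactors, q


theorem S_pos_of (r m : ℕ) (h : ∀ q ∈ m.primeFactors, r < q) : 0 < S r m := by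
  apply Finset.prod_pos
  intro q hq
  have hp := Nat.prime_of_mem_primeFactors hq
  have := h q hq
  exact Nat.mul_pos (Nat.pow_pos hp.pos) (by omega)

theorem gt_of_S_pos (r n : ℕ) (hS : 0 < S r n) : ∀ q ∈ n.primeFactors, r < q := by
  intro q hq
  have h := Finset.prod_ne_zero_iff.mp hS.ne' q hq
  rcases Nat.lt_or_ge r q with h' | h'
  · exact h'
  · exfalso; apply h; have : q - r = 0 := by omega
    simp [this]

theorem n_eq_prod (n : ℕ) (hn : n ≠ 0) : n = ∏ q ∈ n.primeFactors, q ^ n.factorization q := by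
  conv_lhs => rw [← Nat.factorization_prod_pow_eq_self hn]
  rw [← Nat.prod_factorization_eq_prod_primeFactors]

theorem lemA (r K n : ℕ) (hr : 0 < r) (hS : 0 < S r n) (hc : n.primeFactors.card ≤ K) :
    n ≤ (r+1)^K * S r n := by
  rcases Nat.eq_zero_or_pos n with rfl | hn
  · simp
  have hgt := gt_of_S_pos r n hS
  have key : n ≤ (r+1)^n.primeFactors.card * S r n := by
    rw [S, ← Finset.prod_const, ← Finset.prod_mul_distrib]
    conv_lhs => rw [n_eq_prod n hn.ne']
    apply Finset.prod_le_prod'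
    intro q hq
    have hp := Nat.prime_of_mem_primeFactors hq
    have hrq := hgt q hq
    have hf : 1 ≤ n.factorization q := (Nat.Prime.factorization_pos_of_dvd hp hn.ne'
      (Nat.dvd_of_mem_primeFactors hq))
    calc q ^ n.factorization q = q ^ (n.factorization q - 1) * q := by
          rw [← pow_succ]; congr 1; omega
      _ ≤ q ^ (n.factorization q - 1) * ((r+1) * (q - r)) := by
          apply Nat.mul_le_mul_left
          obtain ⟨d, hd, hd1⟩ : ∃ d, q - r = d ∧ 1 ≤ d := ⟨q - r, rfl, by omega⟩
          rw [hd]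
          have : q = r + d := by omega
          rw [this]; nlinarith
      _ = (r + 1) * (q ^ (n.factorization q - 1) * (q - r)) := by ring
  calc n ≤ (r+1)^n.primeFactors.card * S r n := key
    _ ≤ (r+1)^K * S r n := by
        apply Nat.mul_le_mul_right
        exact Nat.pow_le_pow_right (by omega) hc

theorem lemB (r m : ℕ) (hm : m ≠ 0) (T : Finset ℕ) (hT : ∀ q ∈ T, q.Prime)
    (hdvd : (∏ q ∈ T, q) ∣ m) :
    S r m * ∏ q ∈ T, q ≤ m * ∏ q ∈ T, (q - r) := by
  have hsub : T ⊆ m.primeFactors := by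
    intro q hq
    exact Nat.mem_primeFactors.mpr ⟨hT q hq, (Finset.dvd_prod_of_mem _ hq).trans hdvd, hm⟩
  have hsplit : ∀ f : ℕ → ℕ, ∏ q ∈ m.primeFactors, f q = (∏ q ∈ T, f q) * ∏ q ∈ m.primeFactors \ T, f q := by
    intro f
    rw [mul_comm, Finset.prod_sdiff hsub]
  calc S r m * ∏ q ∈ T, q
      = (∏ q ∈ T, (q ^ (m.factorization q - 1) * (q - r) * q)) * ∏ q ∈ m.primeFactors \ T, q ^ (m.factorization q - 1) * (q - r) := by
        rw [S, hsplit (fun q => q ^ (m.factorization q - 1) * (q - r)), mul_right_comm,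
          ← Finset.prod_mul_distrib]
    _ ≤ (∏ q ∈ T, (q ^ (m.factorization q) * (q - r))) * ∏ q ∈ m.primeFactors \ T, q ^ (m.factorization q) := by
        apply Nat.mul_le_mul
        · apply Finset.prod_le_prod'
          intro q hq
          have hp := hT q hq
          have hf : 1 ≤ m.factorization q := (hp.factorization_pos_of_dvd hm
            ((Finset.dvd_prod_of_mem _ hq).trans hdvd))
          calc q ^ (m.factorization q - 1) * (q - r) * q
              = q ^ (m.factorization q - 1) * q * (q - r) := by ring
            _ ≤ q ^ (m.factorization q) * (q - r) := by
                rw [← pow_succ]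
                apply Nat.mul_le_mul_right
                exact Nat.pow_le_pow_right hp.pos (by omega)
        · apply Finset.prod_le_prod'
          intro q hq
          have hp := Nat.prime_of_mem_primeFactors (Finset.mem_sdiff.mp hq).1
          have hf : 1 ≤ m.factorization q := hp.factorization_pos_of_dvd hm
            (Nat.dvd_of_mem_primeFactors (Finset.mem_sdiff.mp hq).1)
          calc q ^ (m.factorization q - 1) * (q - r)
              ≤ q ^ (m.factorization q - 1) * q := Nat.mul_le_mul_left _ (by omega)
            _ ≤ q ^ (m.factorization q) := by
                rw [← pow_succ]
                exact Nat.pow_le_pow_right hp.pos (by omega)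
    _ = m * ∏ q ∈ T, (q - r) := by
        rw [Finset.prod_mul_distrib]
        conv_rhs => rw [n_eq_prod m hm, hsplit (fun q => q ^ m.factorization q)]
        ring

theorem lemE (n M N : ℕ) (hM : 0 < M) (hN : 0 < N) (hco : Nat.Coprime M N) :
    ∃ m : ℕ, n < m ∧ m ≤ n + 2 * (M * N) ∧ M ∣ m ∧ m % N = 1 % N := by
  obtain ⟨k, hk0, hk1⟩ := Nat.chineseRemainder hco 0 1
  set P := M * N with hP
  have hP0 : 0 < P := Nat.mul_pos hM hN
  set k' := k % P with hk'
  set m := k' + P * (n / P + 1) with hm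
  have hkk' : k' ≡ k [MOD P] := Nat.mod_modEq k P
  have hmk' : m ≡ k' [MOD P] := by
    have : P ∣ m - k' := ⟨n / P + 1, by omega⟩
    exact (Nat.modEq_iff_dvd' (by omega)).mpr this |>.symm
  have hmM : m ≡ 0 [MOD M] := ((hmk'.trans hkk').of_dvd ⟨N, rfl⟩).trans hk0
  have hmN : m ≡ 1 [MOD N] := ((hmk'.trans hkk').of_dvd ⟨M, mul_comm M N⟩).trans hk1
  refine ⟨m, ?_, ?_, ?_, hmN⟩
  · have h1 : n < P * (n / P + 1) := by
      have := Nat.div_add_mod n P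
      have := Nat.mod_lt n hP0
      nlinarith [Nat.div_add_mod n P]
    omega
  · have h1 : P * (n / P) ≤ n := Nat.mul_div_le n P |>.trans_eq (by ring_nf)
    have h2 : k' < P := Nat.mod_lt _ hP0
    have : P * (n / P + 1) = P * (n/P) + P := by ring
    omega
  · exact (Nat.modEq_zero_iff_dvd).mp hmM

theorem prod_one_add_ge (T : Finset ℕ) (x : ℕ → ℝ) (hx : ∀ i ∈ T, 0 ≤ x i) :
    1 + ∑ i ∈ T, x i ≤ ∏ i ∈ T, (1 + x i) := by
  induction T using Finset.induction with
  | empty => simp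
  | insert _ _ hnotmem ih =>
    rename_i a s
    rw [Finset.prod_insert hnotmem, Finset.sum_insert hnotmem]
    have h1 := ih (fun i hi => hx i (Finset.mem_insert_of_mem hi))
    have h2 : 0 ≤ x a := hx a (Finset.mem_insert_self a s)
    have h3 : 0 ≤ ∑ i ∈ s, x i := Finset.sum_nonneg (fun i hi => hx i (Finset.mem_insert_of_mem hi))
    nlinarith

theorem lemD (r C : ℕ) : ∃ B : ℕ,
    (C : ℝ) ≤ ∑ q ∈ (Finset.range B).filter (fun q => q.Prime ∧ r < q), (1 : ℝ)/q := by
  set f : ℕ → ℝ := fun q => if q.Prime ∧ r < q then (1:ℝ)/q else 0 with hf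
  have hnonneg : ∀ i, 0 ≤ f i := by
    intro i; rw [hf]; dsimp only
    split
    · positivity
    · exact le_refl 0
  have hnotsum : ¬ Summable f := by
    intro hsum
    apply not_summable_one_div_on_primes
    have heq : indicator {p : ℕ | p.Prime} (fun n : ℕ => (1:ℝ)/n)
        = fun q => f q + (if q.Prime ∧ q ≤ r then (1:ℝ)/q else 0) := by
      funext q
      rw [hf]; dsimp only
      by_cases hq : q.Prime
      · by_cases hqr : r < q
        · simp [indicator, hq, hqr, Nat.not_le.mpr hqr]
        · simp [indicator, hq, hqr, Nat.not_lt.mp hqr]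
      · simp [indicator, hq]
    rw [heq]
    apply Summable.add hsum
    apply summable_of_ne_finset_zero (s := Finset.range (r+1))
    intro q hq
    have : ¬ q ≤ r := by simp at hq; omega
    simp [this]
  have htend := (not_summable_iff_tendsto_nat_atTop_of_nonneg hnonneg).mp hnotsum
  obtain ⟨B, hB⟩ := (htend.eventually_ge_atTop (C : ℝ)).exists
  refine ⟨B, ?_⟩
  rw [Finset.sum_filter]
  exact hB

theorem lemD2 (r C : ℕ) (hr : 0 < r) (hC : 1 ≤ C) (T : Finset ℕ)
    (hT : ∀ q ∈ T, q.Prime ∧ r < q)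
    (hsum : (C : ℝ) ≤ ∑ q ∈ T, (1 : ℝ)/q) :
    C * ∏ q ∈ T, (q - r) ≤ ∏ q ∈ T, q := by
  have key : (C : ℝ) * ∏ q ∈ T, ((q : ℝ) - r) ≤ ∏ q ∈ T, (q : ℝ) := by
    have hpos : ∀ q ∈ T, (0:ℝ) < (q:ℝ) - r := by
      intro q hq
      have := (hT q hq).2
      have : (r:ℝ) < q := by exact_mod_cast this
      linarith
    calc (C : ℝ) * ∏ q ∈ T, ((q : ℝ) - r)
        ≤ (1 + ∑ q ∈ T, (1:ℝ)/q) * ∏ q ∈ T, ((q : ℝ) - r) := by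
          apply mul_le_mul_of_nonneg_right _ (Finset.prod_nonneg (fun q hq => (hpos q hq).le))
          have : (1:ℝ) ≤ C := by exact_mod_cast hC
          linarith
      _ ≤ (∏ q ∈ T, (1 + (1:ℝ)/q)) * ∏ q ∈ T, ((q : ℝ) - r) := by
          apply mul_le_mul_of_nonneg_right _ (Finset.prod_nonneg (fun q hq => (hpos q hq).le))
          exact prod_one_add_ge T _ (fun q hq => by positivity)
      _ = ∏ q ∈ T, ((1 + (1:ℝ)/q) * ((q : ℝ) - r)) := (Finset.prod_mul_distrib).symm
      _ ≤ ∏ q ∈ T, (q : ℝ) := by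
          apply Finset.prod_le_prod
          · intro q hq
            have h1 := hpos q hq
            have h2 : (0:ℝ) < q := (hT q hq).1.pos |> fun h => by exact_mod_cast h
            positivity
          · intro q hq
            have h1 := hpos q hq
            have h2 : (0:ℝ) < q := (hT q hq).1.pos |> fun h => by exact_mod_cast h
            have hr1 : (1:ℝ) ≤ r := by exact_mod_cast hr
            rw [add_mul, one_mul, div_mul_eq_mul_div, one_mul]
            have : ((q:ℝ) - r)/q ≤ 1 := by
              rw [div_le_one h2]; linarith
            linarith
  have hcast : (↑(C * ∏ q ∈ T, (q - r)) : ℝ) ≤ (↑(∏ q ∈ T, q) : ℝ) := by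
    push_cast
    rw [Finset.prod_congr rfl (fun q hq => (Nat.cast_sub (hT q hq).2.le : (↑(q - r):ℝ) = (q:ℝ) - r))]
    exact key
  exact_mod_cast hcast


theorem stmt14 (r Ω : ℕ) (hr : 0 < r) (hΩ : 0 < Ω) :
    {n : ℕ | SST r n ∧ n.primeFactors.card < Ω}.Finite := by
  set C : ℕ := 2 * (r+1)^Ω with hCdef
  have hC1 : 1 ≤ C := by
    have : 0 < (r+1)^Ω := pow_pos (Nat.succ_pos r) Ω
    omega
  obtain ⟨B, hB⟩ := lemD r C
  set T := (Finset.range B).filter (fun q => q.Prime ∧ r < q) with hTdef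
  have hT : ∀ q ∈ T, q.Prime ∧ r < q := by
    intro q hq
    exact (Finset.mem_filter.mp hq).2
  have hTprod : C * ∏ q ∈ T, (q - r) ≤ ∏ q ∈ T, q := lemD2 r C hr hC1 T hT hB
  set M := ∏ q ∈ T, q with hMdef
  set NS := (Finset.range (r+1)).filter Nat.Prime with hNSdef
  set N := ∏ p ∈ NS, p with hNdef
  have hM : 0 < M := Finset.prod_pos (fun q hq => (hT q hq).1.pos)
  have hN : 0 < N := Finset.prod_pos (fun p hp => (Finset.mem_filter.mp hp).2.pos)
  have hco : Nat.Coprime M N := by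
    apply Nat.Coprime.prod_left
    intro q hq
    apply Nat.Coprime.prod_right
    intro p hp
    have hqp : q ≠ p := by
      have h1 := (hT q hq).2
      have h2 := Finset.mem_range.mp (Finset.mem_filter.mp hp).1
      omega
    exact (Nat.coprime_primes (hT q hq).1 (Finset.mem_filter.mp hp).2).mpr hqp
  apply Set.Finite.subset (Set.finite_Iio (2 * (M * N)))
  intro n hn
  obtain ⟨hsst, hcard⟩ := hn
  by_contra hbig
  have hbig : 2 * (M * N) ≤ n := Nat.not_lt.mp hbig
  have hn0 : 0 < n := by
    have : 0 < 2 * (M*N) := by positivity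
    omega
  obtain ⟨m, hnm, hmub, hMm, hmN⟩ := lemE n M N hM hN hco
  have hm2n : m ≤ 2 * n := by omega
  have hm0 : m ≠ 0 := by omega
  -- S r m > 0
  have hSm : 0 < S r m := by
    apply S_pos_of
    intro q hq
    by_contra hqr
    have hqr : q ≤ r := Nat.not_lt.mp hqr
    have hqp := Nat.prime_of_mem_primeFactors hq
    have hqm : q ∣ m := Nat.dvd_of_mem_primeFactors hq
    have hqN : q ∣ N := by
      apply Finset.dvd_prod_of_mem
      rw [hNSdef, Finset.mem_filter, Finset.mem_range]
      exact ⟨by omega, hqp⟩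
    have h1 : q ∣ m % N := (Nat.dvd_mod_iff hqN).mpr hqm
    rw [hmN] at h1
    have h2 : q ∣ 1 := (Nat.dvd_mod_iff hqN).mp h1
    exact hqp.one_lt.ne' (Nat.dvd_one.mp h2)
  have hlt : S r n < S r m := hsst.2 m hnm hSm
  have hA : n ≤ (r+1)^Ω * S r n := lemA r Ω n hr hsst.1 (le_of_lt hcard)
  have hBB : S r m * M ≤ m * ∏ q ∈ T, (q - r) := lemB r m hm0 T (fun q hq => (hT q hq).1) hMm
  have hfinal : n * M < n * M := by
    calc n * M ≤ ((r+1)^Ω * S r n) * M := Nat.mul_le_mul_right M hA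
      _ < ((r+1)^Ω * S r m) * M := by
          have h := mul_lt_mul_of_pos_left hlt (pow_pos (Nat.succ_pos r) Ω)
          exact mul_lt_mul_of_pos_right h hM
      _ = (r+1)^Ω * (S r m * M) := by ring
      _ ≤ (r+1)^Ω * (m * ∏ q ∈ T, (q - r)) := Nat.mul_le_mul_left _ hBB
      _ ≤ (r+1)^Ω * ((2 * n) * ∏ q ∈ T, (q - r)) := by
          apply Nat.mul_le_mul_left
          exact Nat.mul_le_mul_right _ hm2n
      _ = n * (C * ∏ q ∈ T, (q - r)) := by rw [hCdef]; ring
      _ ≤ n * M := Nat.mul_le_mul_left _ hTprod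
  exact absurd hfinal (lt_irrefl _)
end

section
/- For every sparsely Schemmel totient number n of order 2, the fourth power of the largest prime divisor of n does not divide n. -/
lemma S_eq (n : ℕ) : S 2 n = ∏ q ∈ n.primeFactors, q ^ (n.factorization q - 1) * (q - 2) := rfl

lemma S_zero_of_two_dvd {n : ℕ} (hn : n ≠ 0) (h2 : 2 ∣ n) : S 2 n = 0 := by
  refine Finset.prod_eq_zero (i := 2) (Nat.mem_primeFactors.mpr ⟨Nat.prime_two, h2, hn⟩) ?_
  simp

lemma S_pos_of_odd {n : ℕ} (hn : n ≠ 0) (h2 : ¬ 2 ∣ n) : 0 < S 2 n := by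
  apply Finset.prod_pos
  intro r hr
  obtain ⟨hrp, hrd, -⟩ := Nat.mem_primeFactors.mp hr
  have hr2 : r ≠ 2 := by rintro rfl; exact h2 hrd
  have h3 : 3 ≤ r := by have := hrp.two_le; omega
  exact Nat.mul_pos (pow_pos (by omega) _) (by omega)

lemma S_mul_prime_dvd {a q : ℕ} (hq : q.Prime) (ha : a ≠ 0) (hd : q ∣ a) :
    S 2 (a * q) = S 2 a * q := by
  have hq0 : q ≠ 0 := hq.ne_zero
  have hmem : q ∈ a.primeFactors := Nat.mem_primeFactors.mpr ⟨hq, hd, ha⟩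
  have hfq : 1 ≤ a.factorization q := hq.factorization_pos_of_dvd ha hd
  have hPF : (a * q).primeFactors = a.primeFactors := by
    rw [Nat.primeFactors_mul ha hq0, hq.primeFactors]
    exact Finset.union_eq_left.mpr (by simpa using hmem)
  have hfac : ∀ r : ℕ, (a * q).factorization r = a.factorization r + if q = r then 1 else 0 := by
    intro r
    rw [Nat.factorization_mul ha hq0, Finsupp.add_apply, hq.factorization, Finsupp.single_apply]
  rw [S_eq, S_eq, hPF, ← Finset.mul_prod_erase _ _ hmem]
  conv_rhs => rw [← Finset.mul_prod_erase _ _ hmem]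
  have h1 : (∏ r ∈ a.primeFactors.erase q, r ^ ((a * q).factorization r - 1) * (r - 2))
      = ∏ r ∈ a.primeFactors.erase q, r ^ (a.factorization r - 1) * (r - 2) := by
    refine Finset.prod_congr rfl fun r hr => ?_
    have hne : q ≠ r := fun hcontr => (Finset.mem_erase.mp hr).1 hcontr.symm
    rw [hfac, if_neg hne, Nat.add_zero]
  have h2 : q ^ ((a * q).factorization q - 1) * (q - 2)
      = q ^ (a.factorization q - 1) * (q - 2) * q := by
    rw [hfac, if_pos rfl]
    have e1 : a.factorization q + 1 - 1 = a.factorization q - 1 + 1 := by omega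
    rw [e1, pow_succ]
    ring
  rw [h1, h2]
  ring

lemma S_mul_prime_not_dvd {a q : ℕ} (hq : q.Prime) (ha : a ≠ 0) (hd : ¬ q ∣ a) :
    S 2 (a * q) = S 2 a * (q - 2) := by
  have hq0 : q ≠ 0 := hq.ne_zero
  have hmem : q ∉ a.primeFactors := fun hc => hd (Nat.mem_primeFactors.mp hc).2.1
  have hPF : (a * q).primeFactors = insert q a.primeFactors := by
    rw [Nat.primeFactors_mul ha hq0, hq.primeFactors, Finset.union_comm, ← Finset.insert_eq]
  have hfac : ∀ r : ℕ, (a * q).factorization r = a.factorization r + if q = r then 1 else 0 := by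
    intro r
    rw [Nat.factorization_mul ha hq0, Finsupp.add_apply, hq.factorization, Finsupp.single_apply]
  rw [S_eq, S_eq, hPF, Finset.prod_insert hmem]
  have h1 : (∏ r ∈ a.primeFactors, r ^ ((a * q).factorization r - 1) * (r - 2))
      = ∏ r ∈ a.primeFactors, r ^ (a.factorization r - 1) * (r - 2) := by
    refine Finset.prod_congr rfl fun r hr => ?_
    have hne : q ≠ r := fun hcontr => hmem (hcontr ▸ hr)
    rw [hfac, if_neg hne, Nat.add_zero]
  have h2 : q ^ ((a * q).factorization q - 1) * (q - 2) = q - 2 := by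
    rw [hfac, if_pos rfl, Nat.factorization_eq_zero_of_not_dvd hd]
    simp
  rw [h1, h2, mul_comm]

lemma S_mul_pow_prime_dvd {a q : ℕ} (j : ℕ) (hq : q.Prime) (ha : a ≠ 0) (hd : q ∣ a) :
    S 2 (a * q ^ j) = S 2 a * q ^ j := by
  induction j with
  | zero => simp
  | succ j ih =>
      have h1 : a * q ^ (j + 1) = a * q ^ j * q := by ring
      rw [h1, S_mul_prime_dvd hq (mul_ne_zero ha (pow_ne_zero _ hq.ne_zero))
        (dvd_mul_of_dvd_left hd _), ih, pow_succ]
      ring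

lemma S_mul_le (a : ℕ) (ha : a ≠ 0) : ∀ b : ℕ, b ≠ 0 → S 2 (a * b) ≤ S 2 a * b := by
  intro b
  induction b using Nat.strong_induction_on with
  | _ b ih =>
    intro hb
    rcases eq_or_ne b 1 with rfl | hb1
    · simp
    · set pp := b.minFac with hpdef
      have hpp : pp.Prime := Nat.minFac_prime hb1
      obtain ⟨c, hc⟩ := Nat.minFac_dvd b
      have hc0 : c ≠ 0 := by rintro rfl; simp at hc; exact hb hc
      have h2c : 2 * c ≤ b := by
        rw [hc]; exact Nat.mul_le_mul_right c hpp.two_le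
      have hclt : c < b := by omega
      have key : S 2 (a * b) ≤ S 2 (a * c) * pp := by
        have hre : a * b = a * c * pp := by rw [hc]; ring
        rw [hre]
        by_cases hdp : pp ∣ a * c
        · rw [S_mul_prime_dvd hpp (mul_ne_zero ha hc0) hdp]
        · rw [S_mul_prime_not_dvd hpp (mul_ne_zero ha hc0) hdp]
          exact Nat.mul_le_mul_left _ (Nat.sub_le _ _)
      calc S 2 (a * b) ≤ S 2 (a * c) * pp := key
        _ ≤ S 2 a * c * pp := Nat.mul_le_mul_right _ (ih c hclt hc0)
        _ = S 2 a * b := by rw [hc]; ring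

lemma Pk_one_spec {n : ℕ} (hn : n.primeFactors.Nonempty) :
    Pk 1 n ∈ n.primeFactors ∧ ∀ r ∈ n.primeFactors, r ≤ Pk 1 n := by
  classical
  set l := n.primeFactors.sort (· ≤ ·) with hl
  have hsort : l.Pairwise (· ≤ ·) := Finset.pairwise_sort _ _
  have hmem : ∀ x, x ∈ l ↔ x ∈ n.primeFactors := fun x => Finset.mem_sort _
  have hlne : l ≠ [] := by
    obtain ⟨x, hx⟩ := hn
    exact List.ne_nil_of_mem ((hmem x).mpr hx)
  have hrne : l.reverse ≠ [] := by simpa using hlne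
  obtain ⟨a, tl, hrev⟩ := List.exists_cons_of_ne_nil hrne
  have hPk : Pk 1 n = a := by
    show (l.reverse).getD 0 0 = a
    rw [hrev, List.getD_cons_zero]
  have hl2 : l = tl.reverse ++ [a] := by
    have := congrArg List.reverse hrev
    simpa using this
  constructor
  · rw [hPk, ← hmem, hl2]
    simp
  · intro r hr
    rw [hPk]
    have hrl : r ∈ l := (hmem r).mpr hr
    rw [hl2] at hrl
    have hsort2 : (tl.reverse ++ [a]).Pairwise (· ≤ ·) := by rwa [hl2] at hsort
    rcases List.mem_append.mp hrl with hcase | hcase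
    · exact (List.pairwise_append.mp hsort2).2.2 r hcase a (by simp)
    · simp at hcase; omega

theorem stmt16 (n : ℕ) (h : SST 2 n) : ¬ (Pk 1 n) ^ 4 ∣ n := by
  intro h4
  have hS3 : S 2 3 = 1 := by
    have h3p : Nat.Prime 3 := by norm_num
    rw [S_eq, h3p.primeFactors, Finset.prod_singleton, h3p.factorization]
    simp
  -- n = 0 : contradiction from SST itself
  rcases Nat.eq_zero_or_pos n with rfl | hn0
  · have hS0 : S 2 0 = 1 := by rw [S_eq, Nat.primeFactors_zero, Finset.prod_empty]
    have := h.2 3 (by norm_num) (by rw [hS3]; norm_num)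
    rw [hS0, hS3] at this
    exact absurd this (by norm_num)
  rcases eq_or_ne n 1 with rfl | hn1
  · have hPk1 : Pk 1 1 = 0 := by
      show ((Nat.primeFactors 1).sort (· ≤ ·)).reverse.getD 0 0 = 0
      rw [Nat.primeFactors_one, Finset.sort_empty]
      rfl
    rw [hPk1] at h4
    have : (0 : ℕ) ^ 4 = 0 := by norm_num
    rw [this] at h4
    exact absurd (Nat.eq_zero_of_zero_dvd h4) (by norm_num)
  have hn2 : 2 ≤ n := by omega
  have hnne : n ≠ 0 := by omega
  -- n is odd
  have hodd : ¬ 2 ∣ n := by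
    intro h2
    have := S_zero_of_two_dvd hnne h2
    have hpos := h.1
    omega
  have hne : n.primeFactors.Nonempty := Nat.nonempty_primeFactors.mpr (by omega)
  obtain ⟨hPmem, hPmax⟩ := Pk_one_spec hne
  set P := Pk 1 n with hPdef
  obtain ⟨hPp, hPd, -⟩ := Nat.mem_primeFactors.mp hPmem
  clear_value P
  have hP2 : P ≠ 2 := by
    intro hcontr
    rw [hcontr] at hPd
    exact hodd hPd
  have hP3 : 3 ≤ P := by have := hPp.two_le; omega
  -- Bertrand prime q with P < q ≤ 2P
  obtain ⟨q, hqp, hq1, hq2⟩ := Nat.exists_prime_lt_and_le_two_mul P (by omega)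
  have hqN : ¬ q ∣ n := by
    intro hd
    have := hPmax q (Nat.mem_primeFactors.mpr ⟨hqp, hd, hnne⟩)
    omega
  have hq5 : 5 ≤ q := by
    have h2le := hqp.two_le
    have hq4 : q ≠ 4 := by rintro rfl; norm_num at hqp
    omega
  -- key inequality q * (q - 2) ≤ P ^ 3
  have hkey : q * (q - 2) ≤ P ^ 3 := by
    obtain ⟨q2, rfl⟩ : ∃ q2, q = q2 + 2 := ⟨q - 2, by omega⟩
    have hsub : q2 + 2 - 2 = q2 := by omega
    rw [hsub]
    obtain ⟨P3, rfl⟩ : ∃ P3, P = P3 + 3 := ⟨P - 3, by omega⟩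
    have h1 : (q2 + 2) * q2 ≤ (2 * P3 + 6) * (2 * P3 + 4) :=
      Nat.mul_le_mul (by omega) (by omega)
    nlinarith [h1, sq_nonneg P3]
  have hq0 : 0 < q := by omega
  set t := P ^ 3 / q with ht
  have htq : q - 2 ≤ t := (Nat.le_div_iff_mul_le hq0).mpr (by
    calc (q - 2) * q = q * (q - 2) := by ring
      _ ≤ P ^ 3 := hkey)
  have hfloor1 : q * t ≤ P ^ 3 := by
    rw [ht, mul_comm]
    exact Nat.div_mul_le_self _ _
  have hfloor2 : P ^ 3 < q * t + q := by
    have hdm := Nat.div_add_mod (P ^ 3) q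
    rw [← ht] at hdm
    have hmod : P ^ 3 % q < q := Nat.mod_lt _ hq0
    calc P ^ 3 = q * t + P ^ 3 % q := hdm.symm
      _ < q * t + q := Nat.add_lt_add_left hmod _
  -- choose the odd element u0 of {t+1, t+2}
  set u0 := if (t + 1) % 2 = 1 then t + 1 else t + 2 with hu0def
  have hu0b : t + 1 ≤ u0 ∧ u0 ≤ t + 2 := by
    rw [hu0def]; split_ifs <;> omega
  have hu0odd : ¬ 2 ∣ u0 := by
    rw [hu0def]; split_ifs with hcase <;> omega
  have hu00 : u0 ≠ 0 := by omega
  -- size and budget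
  have hsize : P ^ 3 < q * u0 := by
    calc P ^ 3 < q * t + q := hfloor2
      _ = q * (t + 1) := by ring
      _ ≤ q * u0 := Nat.mul_le_mul_left q hu0b.1
  have hbudget : (q - 2) * u0 ≤ P ^ 3 := by
    calc (q - 2) * u0 ≤ (q - 2) * (t + 2) := Nat.mul_le_mul_left _ hu0b.2
      _ = (q - 2) * t + 2 * (q - 2) := by ring
      _ ≤ (q - 2) * t + 2 * t := Nat.add_le_add_left (by omega) _
      _ = (q - 2 + 2) * t := by ring
      _ = q * t := by
          have : q - 2 + 2 = q := by omega
          rw [this]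
      _ ≤ P ^ 3 := hfloor1
  -- decompose n = a * P^3 with P ∣ a
  obtain ⟨K, hK⟩ := h4
  have hK0 : K ≠ 0 := by
    rintro rfl
    rw [Nat.mul_zero] at hK
    omega
  set a := P * K with hadef
  have hna : n = a * P ^ 3 := by rw [hK, hadef]; ring
  have ha0 : a ≠ 0 := by
    rw [hadef]
    exact Nat.mul_ne_zero (by omega) hK0
  have hPa : P ∣ a := ⟨K, rfl⟩
  have haN : a ∣ n := ⟨P ^ 3, hna⟩
  have hSn : S 2 n = S 2 a * P ^ 3 := by
    rw [hna]
    exact S_mul_pow_prime_dvd 3 hPp ha0 hPa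
  -- q-adic decomposition of u0
  set v := u0.factorization q with hv
  set C := u0 / q ^ v with hC
  have hCC : q ^ v * C = u0 := Nat.ordProj_mul_ordCompl_eq_self u0 q
  have hqC : ¬ q ∣ C := Nat.not_dvd_ordCompl hqp hu00
  have hC0 : C ≠ 0 := by
    intro hc
    rw [hc, Nat.mul_zero] at hCC
    exact hu00 hCC.symm
  have hqa : ¬ q ∣ a := fun hdvd => hqN (hdvd.trans haN)
  have hqaC : ¬ q ∣ a * C := by
    intro hdvd
    rcases (Nat.Prime.dvd_mul hqp).mp hdvd with hcase | hcase
    · exact hqa hcase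
    · exact hqC hcase
  have haC0 : a * C ≠ 0 := Nat.mul_ne_zero ha0 hC0
  -- the competitor m
  set m := a * C * q ^ (v + 1) with hmdef
  have hm2 : m = a * u0 * q := by
    rw [hmdef, pow_succ, ← hCC]
    ring
  have hm0 : m ≠ 0 := by
    rw [hm2]
    exact Nat.mul_ne_zero (Nat.mul_ne_zero ha0 hu00) (by omega)
  have hmgt : n < m := by
    rw [hna, hm2]
    calc a * P ^ 3 < a * (q * u0) := by
          have ha1 : 0 < a := by omega
          exact (mul_lt_mul_iff_right₀ ha1).mpr hsize
      _ = a * u0 * q := by ring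
  have hSm1 : S 2 m = S 2 (a * C) * ((q - 2) * q ^ v) := by
    have hre : m = a * C * q * q ^ v := by rw [hmdef, pow_succ]; ring
    rw [hre, S_mul_pow_prime_dvd v hqp (Nat.mul_ne_zero haC0 (by omega)) (dvd_mul_left q (a * C)),
      S_mul_prime_not_dvd hqp haC0 hqaC]
    ring
  have hSmle : S 2 m ≤ S 2 n := by
    calc S 2 m = S 2 (a * C) * ((q - 2) * q ^ v) := hSm1
      _ ≤ S 2 a * C * ((q - 2) * q ^ v) :=
          Nat.mul_le_mul_right _ (S_mul_le a ha0 C hC0)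
      _ = S 2 a * ((q - 2) * (q ^ v * C)) := by ring
      _ = S 2 a * ((q - 2) * u0) := by rw [hCC]
      _ ≤ S 2 a * P ^ 3 := Nat.mul_le_mul_left _ hbudget
      _ = S 2 n := hSn.symm
  -- m is odd
  have hmodd : ¬ 2 ∣ m := by
    rw [hm2]
    intro h2d
    rcases (Nat.Prime.dvd_mul Nat.prime_two).mp h2d with hcase | hcase
    · rcases (Nat.Prime.dvd_mul Nat.prime_two).mp hcase with hcase2 | hcase2
      · exact hodd (hcase2.trans haN)
      · exact hu0odd hcase2
    · have := (Nat.prime_dvd_prime_iff_eq Nat.prime_two hqp).mp hcase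
      omega
  have hSmpos : 0 < S 2 m := S_pos_of_odd hm0 hmodd
  have hlt := h.2 m hmgt hSmpos
  omega
end
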